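/- Let B, B' be unital associative superalgebras with B' having a countable basis, R = B ⊗ B'. If V is a simple R-module containing a strictly simple B'-submodule M' (where B' acts as ℂ⊗B'), then V ≅ M ⊗ M' for some simple B-module M. -/

import Mathlib

open TensorProduct

open TensorProduct

/-- For a linearly independent family in a vector space there are dual functionals. -/
lemma exists_dual_family {K P : Type*} [Field K] [AddCommGroup P] [Module K P] {n : ℕ}
    {p : Fin n → P} (hp : LinearIndependent K p) (j : Fin n) :
    ∃ Φ : P →ₗ[K] K, ∀ i, Φ (p i) = if i = j then 1 else 0 := by
  classical
  set s := Submodule.span K (Set.range p) with hs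
  obtain ⟨q, hq⟩ := s.exists_isCompl
  let b : Module.Basis (Fin n) K s := Module.Basis.span hp
  refine ⟨(b.coord j) ∘ₗ (s.linearProjOfIsCompl q hq), fun i => ?_⟩
  have hmem : p i ∈ s := Submodule.subset_span ⟨i, rfl⟩
  have h1 : (s.linearProjOfIsCompl q hq) (p i) = b i := by
    have : ((b i : s) : P) = p i := congrArg Subtype.val (Module.Basis.span_apply hp i)
    rw [← this]
    exact Submodule.linearProjOfIsCompl_apply_left hq (b i)
  simp only [LinearMap.comp_apply, h1]
  rw [Module.Basis.coord_apply, Module.Basis.repr_self]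
  simp [Finsupp.single_apply, eq_comm]

/-- A nonzero vector admits a functional with value 1. -/
lemma exists_dual_one {K P : Type*} [Field K] [AddCommGroup P] [Module K P] {x : P}
    (hx : x ≠ 0) : ∃ Φ : P →ₗ[K] K, Φ x = 1 := by
  have hli : LinearIndependent K (fun _ : Fin 1 => x) := linearIndependent_unique_iff.mpr hx
  obtain ⟨Φ, hΦ⟩ := exists_dual_family hli 0
  exact ⟨Φ, by simpa using hΦ 0⟩

/-- If evaluation kills only trivial relations on linearly independent families,
the lifted map on the tensor product has trivial kernel. -/
lemma tensor_injective {U W V : Type} [AddCommGroup U] [Module ℂ U] [AddCommGroup W]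
    [Module ℂ W] [AddCommGroup V] [Module ℂ V] (E : U →ₗ[ℂ] W →ₗ[ℂ] V)
    (h : ∀ (n : ℕ) (f : Fin n → U), LinearIndependent ℂ f →
        ∀ m : Fin n → W, (∑ i, E (f i) (m i)) = 0 → ∀ i, m i = 0) :
    ∀ t : U ⊗[ℂ] W, TensorProduct.lift E t = 0 → t = 0 := by
  classical
  intro t ht
  let b := Module.Basis.ofVectorSpace ℂ U
  let Ψ : U ⊗[ℂ] W ≃ₗ[ℂ] ((Module.Basis.ofVectorSpaceIndex ℂ U) →₀ W) :=
    (TensorProduct.congr b.repr (LinearEquiv.refl ℂ W)).trans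
      (TensorProduct.finsuppScalarLeft ℂ W _)
  have hΨ : ∀ (i : Module.Basis.ofVectorSpaceIndex ℂ U) (w : W),
      Ψ.symm (Finsupp.single i w) = b i ⊗ₜ[ℂ] w := by
    intro i w
    simp only [Ψ, LinearEquiv.trans_symm, LinearEquiv.trans_apply,
      TensorProduct.finsuppScalarLeft_symm_apply_single]
    rw [TensorProduct.congr_symm_tmul]
    simp [Module.Basis.repr_symm_single_one]
  set c := Ψ t with hc
  have ht' : t = ∑ i ∈ c.support, b i ⊗ₜ[ℂ] c i := by
    have : Ψ.symm c = t := Ψ.symm_apply_apply t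
    rw [← this]
    conv_lhs => rw [← Finsupp.sum_single c]
    rw [Finsupp.sum, map_sum]
    exact Finset.sum_congr rfl fun i _ => hΨ i (c i)
  set s := c.support with hsupp
  let eqv : Fin s.card ≃ s := s.equivFin.symm
  have hli : LinearIndependent ℂ (fun j : Fin s.card => b ((eqv j) : Module.Basis.ofVectorSpaceIndex ℂ U)) :=
    b.linearIndependent.comp _ (Subtype.val_injective.comp eqv.injective)
  have hsum : (∑ j : Fin s.card, E (b ((eqv j) : Module.Basis.ofVectorSpaceIndex ℂ U))
      (c ((eqv j) : Module.Basis.ofVectorSpaceIndex ℂ U))) = 0 := by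
    have := Equiv.sum_comp eqv (fun x : s => E (b (x : Module.Basis.ofVectorSpaceIndex ℂ U))
      (c (x : Module.Basis.ofVectorSpaceIndex ℂ U)))
    rw [this, Finset.sum_coe_sort s (fun x => E (b x) (c x))]
    have : TensorProduct.lift E t = ∑ i ∈ s, E (b i) (c i) := by
      rw [ht']
      rw [map_sum]
      exact Finset.sum_congr rfl fun i _ => by rw [TensorProduct.lift.tmul]
    rw [← this, ht]
  have hz := h s.card _ hli _ hsum
  have hc0 : c = 0 := by
    ext i
    by_cases hi : i ∈ s
    · have := hz (eqv.symm ⟨i, hi⟩)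
      simpa using this
    · exact Finsupp.notMem_support_iff.mp hi
  have hΨt : Ψ t = 0 := by rw [← hc, hc0]
  have := congrArg Ψ.symm hΨt
  rwa [Ψ.symm_apply_apply, map_zero] at this

/-- Dixmier's lemma: over ℂ, if `W` is a strictly simple module over an algebra with a
countable basis (action via `ρ`), then every endomorphism commuting with the action is scalar. -/
lemma schur_scalar {A W : Type} [Ring A] [Algebra ℂ A] [AddCommGroup W] [Module ℂ W]
    (hA : ∃ (ι : Type) (_ : Module.Basis ι ℂ A), Countable ι)
    (ρ : A →ₐ[ℂ] Module.End ℂ W) (hnt : Nontrivial W)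
    (hs : ∀ N : Submodule ℂ W, (∀ a, N.map (ρ a) ≤ N) → N = ⊥ ∨ N = ⊤)
    (e : Module.End ℂ W) (he : ∀ a, e * ρ a = ρ a * e) :
    ∃ c : ℂ, e = c • (1 : Module.End ℂ W) := by
  classical
  -- commutant elements are zero or bijective
  have hbij : ∀ u : Module.End ℂ W, (∀ a, u * ρ a = ρ a * u) → u ≠ 0 →
      Function.Bijective u := by
    intro u hu hne
    have hup : ∀ (a : A) (x : W), u (ρ a x) = ρ a (u x) := by
      intro a x
      have := congrArg (fun f : Module.End ℂ W => f x) (hu a)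
      simpa [Module.End.mul_apply] using this
    constructor
    · have hk : LinearMap.ker u = ⊥ ∨ LinearMap.ker u = ⊤ := by
        refine hs _ fun a => ?_
        rintro x ⟨y, hy, rfl⟩
        have : u (ρ a y) = 0 := by rw [hup]; rw [LinearMap.mem_ker.mp hy, map_zero]
        exact LinearMap.mem_ker.mpr this
      rcases hk with hk | hk
      · exact LinearMap.ker_eq_bot.mp hk
      · exact absurd (LinearMap.ker_eq_top.mp hk) hne
    · have hr : LinearMap.range u = ⊥ ∨ LinearMap.range u = ⊤ := by
        refine hs _ fun a => ?_
        rintro x ⟨y, ⟨z, rfl⟩, rfl⟩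
        exact ⟨ρ a z, hup a z⟩
      rcases hr with hr | hr
      · exact absurd (LinearMap.range_eq_bot.mp hr) hne
      · exact LinearMap.range_eq_top.mp hr
  by_contra hcon
  push_neg at hcon
  obtain ⟨w₀, hw₀⟩ := exists_ne (0 : W)
  -- each e - c is bijective
  have hcomm : ∀ c : ℂ, ∀ a, (e - c • (1 : Module.End ℂ W)) * ρ a
      = ρ a * (e - c • (1 : Module.End ℂ W)) := by
    intro c a
    rw [sub_mul, mul_sub, he a, smul_mul_assoc, mul_smul_comm, one_mul, mul_one]
  have hbijc : ∀ c : ℂ, Function.Bijective ⇑(e - c • (1 : Module.End ℂ W)) :=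
    fun c => hbij _ (hcomm c) (sub_ne_zero.mpr (hcon c))
  let G : ℂ → (W ≃ₗ[ℂ] W) := fun c => LinearEquiv.ofBijective _ (hbijc c)
  let u : ℂ → W := fun c => (G c).symm w₀
  have hGu : ∀ c : ℂ, (e - c • (1 : Module.End ℂ W)) (u c) = w₀ := by
    intro c
    have := (G c).apply_symm_apply w₀
    simpa [G, u] using this
  have hXC : ∀ c : ℂ, (Polynomial.aeval e (Polynomial.X - Polynomial.C c)
      : Module.End ℂ W) = e - c • (1 : Module.End ℂ W) := by
    intro c; simp [Algebra.algebraMap_eq_smul_one]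
  -- nonzero polynomials act injectively
  have haeval : ∀ (n : ℕ) (p : Polynomial ℂ), p.natDegree ≤ n → p ≠ 0 →
      Function.Injective (Polynomial.aeval e p : Module.End ℂ W) := by
    intro n
    induction n with
    | zero =>
      intro p hdeg hne
      have hp : p = Polynomial.C (p.coeff 0) :=
        Polynomial.eq_C_of_natDegree_eq_zero (Nat.le_zero.mp hdeg)
      have hc : p.coeff 0 ≠ 0 := by
        intro h; exact hne (by rw [hp, h, map_zero])
      rw [hp, Polynomial.aeval_C]
      intro x y hxy
      have : (p.coeff 0) • x = (p.coeff 0) • y := by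
        simpa [Algebra.algebraMap_eq_smul_one] using hxy
      exact smul_right_injective W hc this
    | succ n ih =>
      intro p hdeg hne
      by_cases h0 : p.natDegree = 0
      · exact ih p (by omega) hne
      · obtain ⟨z, hz⟩ := IsAlgClosed.exists_root p (by
          intro h
          exact h0 (Polynomial.natDegree_eq_zero_iff_degree_le_zero.mpr (le_of_eq h)))
        obtain ⟨q, hq⟩ := (Polynomial.dvd_iff_isRoot.mpr hz)
        have hqne : q ≠ 0 := by
          intro h; exact hne (by rw [hq, h, mul_zero])
        have hqdeg : q.natDegree ≤ n := by
          have := Polynomial.natDegree_mul (Polynomial.X_sub_C_ne_zero z) hqne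
          rw [← hq, Polynomial.natDegree_X_sub_C] at this
          omega
        rw [hq, map_mul]
        have h1 : Function.Injective (Polynomial.aeval e (Polynomial.X - Polynomial.C z)
            : Module.End ℂ W) := by
          rw [hXC z]; exact (hbijc z).1
        exact fun x y hxy => (ih q hqdeg hqne) (h1 (by
          simpa [Module.End.mul_apply] using hxy))
  -- the resolvent family is linearly independent
  have hli : LinearIndependent ℂ u := by
    rw [linearIndependent_iff']
    intro s g hsum i hi
    set p : Polynomial ℂ :=
      ∑ c ∈ s, Polynomial.C (g c) * ∏ c' ∈ s.erase c, (Polynomial.X - Polynomial.C c') with hp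
    have hterm : ∀ c ∈ s,
        (Polynomial.aeval e (∏ c' ∈ s.erase c, (Polynomial.X - Polynomial.C c'))
          : Module.End ℂ W) w₀
        = (Polynomial.aeval e (∏ c' ∈ s, (Polynomial.X - Polynomial.C c'))
          : Module.End ℂ W) (u c) := by
      intro c hc
      conv_lhs => rw [← hGu c]
      rw [← Module.End.mul_apply, ← hXC c, ← map_mul, Finset.prod_erase_mul s _ hc]
    have hpval : (Polynomial.aeval e p : Module.End ℂ W) w₀ = 0 := by
      have e1 : (Polynomial.aeval e p : Module.End ℂ W) w₀
          = ∑ c ∈ s, g c • ((Polynomial.aeval e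
            (∏ c' ∈ s.erase c, (Polynomial.X - Polynomial.C c'))
            : Module.End ℂ W) w₀) := by
        rw [hp, map_sum, LinearMap.sum_apply]
        refine Finset.sum_congr rfl fun c _ => ?_
        rw [map_mul, Polynomial.aeval_C, Module.End.mul_apply,
          Algebra.algebraMap_eq_smul_one]
        simp
      rw [e1]
      have e2 : ∑ c ∈ s, g c • ((Polynomial.aeval e
            (∏ c' ∈ s.erase c, (Polynomial.X - Polynomial.C c'))
            : Module.End ℂ W) w₀)
          = (Polynomial.aeval e (∏ c' ∈ s, (Polynomial.X - Polynomial.C c'))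
            : Module.End ℂ W) (∑ c ∈ s, g c • u c) := by
        rw [map_sum]
        refine Finset.sum_congr rfl fun c hc => ?_
        rw [hterm c hc, map_smul]
      rw [e2, hsum, map_zero]
    have hpzero : p = 0 := by
      by_contra hpne
      have hinj := haeval p.natDegree p le_rfl hpne
      have : w₀ = 0 := hinj (by rw [hpval, map_zero])
      exact hw₀ this
    have heval := congrArg (Polynomial.eval i) hpzero
    rw [hp] at heval
    simp only [Polynomial.eval_finset_sum, Polynomial.eval_mul, Polynomial.eval_C,
      Polynomial.eval_prod, Polynomial.eval_sub, Polynomial.eval_X,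
      Polynomial.eval_zero] at heval
    rw [Finset.sum_eq_single_of_mem i hi (fun c hc hne => ?_)] at heval
    · have hprod : (∏ c' ∈ s.erase i, (i - c')) ≠ 0 := by
        rw [Finset.prod_ne_zero_iff]
        intro c' hc'
        exact sub_ne_zero.mpr (Ne.symm (Finset.ne_of_mem_erase hc'))
      exact (mul_eq_zero.mp heval).resolve_right hprod
    · have : i ∈ s.erase c := Finset.mem_erase.mpr ⟨Ne.symm hne, hi⟩
      rw [Finset.prod_eq_zero this (by ring), mul_zero]
  have h1 : Cardinal.mk ℂ ≤ Module.rank ℂ W := hli.cardinal_le_rank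
  obtain ⟨ι, bA, hι⟩ := hA
  -- W is spanned by a countable family
  let T : A →ₗ[ℂ] W :=
    { toFun := fun a => ρ a w₀
      map_add' := fun a b => by simp only [map_add, LinearMap.add_apply]
      map_smul' := fun c a => by simp only [map_smul, LinearMap.smul_apply, RingHom.id_apply] }
  have hT : Function.Surjective T := by
    have hr : LinearMap.range T = ⊥ ∨ LinearMap.range T = ⊤ := by
      refine hs _ fun a => ?_
      rintro x ⟨y, ⟨z, rfl⟩, rfl⟩
      refine ⟨a * z, ?_⟩
      show ρ (a * z) w₀ = ρ a (T z)
      rw [map_mul]; rfl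
    rcases hr with hr | hr
    · exfalso
      have h10 : T 1 = 0 := by
        have : T 1 ∈ LinearMap.range T := ⟨1, rfl⟩
        rw [hr] at this
        simpa using this
      rw [show T 1 = w₀ by show ρ 1 w₀ = w₀; rw [map_one]; rfl] at h10
      exact hw₀ h10
    · exact LinearMap.range_eq_top.mp hr
  have h2 : Module.rank ℂ W ≤ Cardinal.aleph0 := by
    refine le_trans (T.rank_le_of_surjective hT) ?_
    have := bA.mk_eq_rank
    rw [Cardinal.lift_id, Cardinal.lift_id] at this
    rw [← this]
    exact Cardinal.mk_le_aleph0
  rw [Cardinal.mk_complex] at h1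
  exact absurd (le_trans h1 h2) (not_le.mpr Cardinal.aleph0_lt_continuum)

/-- Key lemma: if `M'` is strictly simple with scalar commutant and `f i` are linearly
independent `B'`-equivariant maps into `V`, then `∑ f i (m i) = 0` forces all `m i = 0`. -/
lemma indep_eval {B' M' V : Type} [Ring B'] [Algebra ℂ B']
    [AddCommGroup M'] [Module ℂ M'] [AddCommGroup V] [Module ℂ V]
    (ρM' : B' →ₐ[ℂ] Module.End ℂ M') (ρ' : B' →ₐ[ℂ] Module.End ℂ V)
    (hstrict : ∀ N : Submodule ℂ M', (∀ b', N.map (ρM' b') ≤ N) → N = ⊥ ∨ N = ⊤)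
    (hschur : ∀ e : Module.End ℂ M', (∀ b', e * ρM' b' = ρM' b' * e) →
      ∃ c : ℂ, e = c • (1 : Module.End ℂ M')) :
    ∀ (n : ℕ) (f : Fin n → (M' →ₗ[ℂ] V)),
      (∀ i b' x, (f i) (ρM' b' x) = ρ' b' ((f i) x)) →
      LinearIndependent ℂ f →
      ∀ m : Fin n → M', (∑ i, f i (m i)) = 0 → ∀ i, m i = 0 := by
  intro n
  induction n with
  | zero => intro f _ _ m _ i; exact absurd i.2 (by omega)
  | succ n ih =>
    intro f hf hli m hsum
    set f0 : Fin n → (M' →ₗ[ℂ] V) := fun k => f k.castSucc with hf0def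
    have hf0 : ∀ k b' x, (f0 k) (ρM' b' x) = ρ' b' ((f0 k) x) := fun k => hf k.castSucc
    have hli0 : LinearIndependent ℂ f0 :=
      hli.comp Fin.castSucc (Fin.castSucc_injective n)
    have hsum' : ∀ b', ∑ i, f i (ρM' b' (m i)) = 0 := by
      intro b'
      have : ∑ i, f i (ρM' b' (m i)) = ρ' b' (∑ i, f i (m i)) := by
        rw [map_sum]
        exact Finset.sum_congr rfl fun i _ => hf i b' (m i)
      rw [this, hsum, map_zero]
    by_cases hlast : m (Fin.last n) = 0
    · have hrest : ∑ k : Fin n, f0 k (m k.castSucc) = 0 := by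
        have := hsum
        rw [Fin.sum_univ_castSucc] at this
        rw [hlast, map_zero, add_zero] at this
        exact this
      have := ih f0 hf0 hli0 (fun k => m k.castSucc) hrest
      intro i
      refine Fin.lastCases hlast (fun k => this k) i
    · exfalso
      have hker : ∀ b', ρM' b' (m (Fin.last n)) = 0 →
          ∀ k : Fin n, ρM' b' (m k.castSucc) = 0 := by
        intro b' hb' k
        have h1 := hsum' b'
        rw [Fin.sum_univ_castSucc, hb', map_zero, add_zero] at h1
        exact ih f0 hf0 hli0 (fun k => ρM' b' (m k.castSucc)) h1 k
      -- the orbit maps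
      let T : Fin (n + 1) → (B' →ₗ[ℂ] M') := fun k =>
        { toFun := fun b' => ρM' b' (m k)
          map_add' := fun a b => by simp only [map_add, LinearMap.add_apply]
          map_smul' := fun c a => by
            simp only [map_smul, LinearMap.smul_apply, RingHom.id_apply] }
      have hTmul : ∀ k (a b' : B'), T k (a * b') = ρM' a (T k b') := by
        intro k a b'
        show ρM' (a * b') (m k) = ρM' a (ρM' b' (m k))
        rw [map_mul]; rfl
      have hTsurj : Function.Surjective (T (Fin.last n)) := by
        have hr : LinearMap.range (T (Fin.last n)) = ⊥ ∨
            LinearMap.range (T (Fin.last n)) = ⊤ := by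
          refine hstrict _ fun a => ?_
          rintro x ⟨y, ⟨z, rfl⟩, rfl⟩
          exact ⟨a * z, (hTmul _ a z).symm ▸ rfl⟩
        rcases hr with hr | hr
        · exfalso
          have : T (Fin.last n) 1 ∈ LinearMap.range (T (Fin.last n)) := ⟨1, rfl⟩
          rw [hr] at this
          have h1 : T (Fin.last n) 1 = m (Fin.last n) := by
            show ρM' 1 (m (Fin.last n)) = m (Fin.last n); rw [map_one]; rfl
          rw [h1] at this
          exact hlast (by simpa using this)
        · exact LinearMap.range_eq_top.mp hr
      have hle : ∀ k : Fin n, LinearMap.ker (T (Fin.last n)) ≤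
          LinearMap.ker (T k.castSucc) := by
        intro k b' hb'
        exact LinearMap.mem_ker.mpr (hker b' (LinearMap.mem_ker.mp hb') k)
      -- the quotient equivalence
      let eT : (B' ⧸ LinearMap.ker (T (Fin.last n))) ≃ₗ[ℂ] M' :=
        (T (Fin.last n)).quotKerEquivOfSurjective hTsurj
      have heT : ∀ b', eT (Submodule.Quotient.mk b') = T (Fin.last n) b' := by
        intro b'
        rfl
      let ψ : Fin n → Module.End ℂ M' := fun k =>
        ((LinearMap.ker (T (Fin.last n))).liftQ (T k.castSucc) (hle k)) ∘ₗ
          (eT.symm : M' →ₗ[ℂ] (B' ⧸ LinearMap.ker (T (Fin.last n))))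
      have hψ : ∀ k b', ψ k (T (Fin.last n) b') = T k.castSucc b' := by
        intro k b'
        have h1 : eT.symm (T (Fin.last n) b') = Submodule.Quotient.mk b' :=
          eT.symm_apply_eq.mpr (heT b').symm
        show ((LinearMap.ker (T (Fin.last n))).liftQ (T k.castSucc) (hle k))
          (eT.symm (T (Fin.last n) b')) = T k.castSucc b'
        rw [h1, Submodule.liftQ_apply]
      have hψcomm : ∀ k b'', ψ k * ρM' b'' = ρM' b'' * ψ k := by
        intro k b''
        apply LinearMap.ext
        intro x
        obtain ⟨b', rfl⟩ := hTsurj x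
        rw [Module.End.mul_apply, Module.End.mul_apply, ← hTmul _ b'' b', hψ, hψ,
          hTmul _ b'' b']
      have hc : ∀ k : Fin n, ∃ c : ℂ, ψ k = c • (1 : Module.End ℂ M') :=
        fun k => hschur (ψ k) (hψcomm k)
      choose c hcspec using hc
      have hmk : ∀ k : Fin n, m k.castSucc = c k • m (Fin.last n) := by
        intro k
        have h1 : T (Fin.last n) 1 = m (Fin.last n) := by
          show ρM' 1 (m (Fin.last n)) = m (Fin.last n); rw [map_one]; rfl
        have h2 : T k.castSucc 1 = m k.castSucc := by
          show ρM' 1 (m k.castSucc) = m k.castSucc; rw [map_one]; rfl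
        have := hψ k 1
        rw [h1, h2, hcspec k] at this
        simpa using this.symm
      -- the combined map
      set g : M' →ₗ[ℂ] V := f (Fin.last n) + ∑ k : Fin n, c k • f k.castSucc with hgdef
      have hgne : g ≠ 0 := by
        intro hg0
        let coef : Fin (n+1) → ℂ := Fin.lastCases 1 c
        have hrel : ∑ i : Fin (n+1), coef i • f i = 0 := by
          rw [Fin.sum_univ_castSucc]
          simp only [coef, Fin.lastCases_castSucc, Fin.lastCases_last, one_smul]
          rw [add_comm]
          exact hgdef ▸ hg0
        have := linearIndependent_iff'.mp hli Finset.univ coef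
          (by simpa using hrel) (Fin.last n) (Finset.mem_univ _)
        simp [coef] at this
      have hgB' : ∀ b' x, g (ρM' b' x) = ρ' b' (g x) := by
        intro b' x
        simp only [hgdef, LinearMap.add_apply, LinearMap.sum_apply, LinearMap.smul_apply]
        rw [hf (Fin.last n) b' x, map_add, map_sum]
        congr 1
        refine Finset.sum_congr rfl fun k _ => ?_
        rw [hf k.castSucc b' x, map_smul]
      have hg0 : g (m (Fin.last n)) = 0 := by
        have : g (m (Fin.last n)) = ∑ i : Fin (n+1), f i (m i) := by
          rw [Fin.sum_univ_castSucc]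
          simp only [hgdef, LinearMap.add_apply, LinearMap.sum_apply, LinearMap.smul_apply]
          rw [add_comm]
          congr 1
          refine Finset.sum_congr rfl fun k _ => ?_
          rw [hmk k, map_smul]
        rw [this, hsum]
      have hkg : LinearMap.ker g = ⊥ ∨ LinearMap.ker g = ⊤ := by
        refine hstrict _ fun b' => ?_
        rintro x ⟨y, hy, rfl⟩
        refine LinearMap.mem_ker.mpr ?_
        rw [hgB' b' y, LinearMap.mem_ker.mp hy, map_zero]
      rcases hkg with hkg | hkg
      · exact hlast (by
          have : m (Fin.last n) ∈ LinearMap.ker g := LinearMap.mem_ker.mpr hg0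
          rw [hkg] at this
          simpa using this)
      · exact hgne (LinearMap.ker_eq_top.mp hkg)


set_option maxHeartbeats 1000000 in

/-- Let `B`, `B'` be unital associative superalgebras (gradings given by
involutive automorphisms), `B'` with a countable basis, and let `V` be a simple module over
`R = B ⊗ B'` (encoded as a pair of supercommuting actions of `B` and `B'` on `V`,
compatible with the grading `σV`).  If `V` contains a strictly simple `B' = ℂ ⊗ B'`
submodule `M'` (given by the equivariant embedding `ι`), then `V ≅ M ⊗ M'` as
`R`-modules for some simple `B`-supermodule `M`. -/
theorem stmt_3
    (B B' : Type) [Ring B] [Algebra ℂ B] [Ring B'] [Algebra ℂ B']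
    (σB : B ≃ₐ[ℂ] B) (hσB : ∀ b, σB (σB b) = b)
    (σB' : B' ≃ₐ[ℂ] B') (hσB' : ∀ b, σB' (σB' b) = b)
    (hcount : ∃ (ι : Type) (_ : Module.Basis ι ℂ B'), Countable ι)
    (V : Type) [AddCommGroup V] [Module ℂ V]
    (ρ : B →ₐ[ℂ] Module.End ℂ V) (ρ' : B' →ₐ[ℂ] Module.End ℂ V)
    (σV : Module.End ℂ V) (hσV : σV * σV = 1)
    (hcomp : ∀ b, σV * ρ b = ρ (σB b) * σV)
    (hcomp' : ∀ b', σV * ρ' b' = ρ' (σB' b') * σV)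
    -- the two actions supercommute on homogeneous elements
    (hsc1 : ∀ (b : B) (b' : B'), (σB b = b ∨ σB' b' = b') →
        ρ b * ρ' b' = ρ' b' * ρ b)
    (hsc2 : ∀ (b : B) (b' : B'), σB b = -b → σB' b' = -b' →
        ρ b * ρ' b' = -(ρ' b' * ρ b))
    -- `V` is a simple (graded) `R`-module
    (hVsimple : Nontrivial V ∧ ∀ N : Submodule ℂ V,
        N.map σV ≤ N → (∀ b, N.map (ρ b) ≤ N) → (∀ b', N.map (ρ' b') ≤ N) →
        N = ⊥ ∨ N = ⊤)
    -- a strictly simple `B'`-supermodule `M'` embedded `B'`-equivariantly in `V`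
    (M' : Type) [AddCommGroup M'] [Module ℂ M']
    (ρM' : B' →ₐ[ℂ] Module.End ℂ M')
    (σM' : Module.End ℂ M') (hσM' : σM' * σM' = 1)
    (hcompM' : ∀ b', σM' * ρM' b' = ρM' (σB' b') * σM')
    (emb : M' →ₗ[ℂ] V) (hinj : Function.Injective emb)
    (hequiv : ∀ b', emb ∘ₗ (ρM' b' : M' →ₗ[ℂ] M') = (ρ' b' : V →ₗ[ℂ] V) ∘ₗ emb)
    (hgr : emb ∘ₗ σM' = σV ∘ₗ emb)
    (hstrict : Nontrivial M' ∧ ∀ N : Submodule ℂ M',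
        (∀ b', N.map (ρM' b') ≤ N) → N = ⊥ ∨ N = ⊤) :
    ∃ (M : Type) (_ : AddCommGroup M) (_ : Module ℂ M)
      (ρM : B →ₐ[ℂ] Module.End ℂ M) (σM : Module.End ℂ M),
      σM * σM = 1 ∧ (∀ b, σM * ρM b = ρM (σB b) * σM) ∧
      -- `M` is a simple `B`-supermodule
      (Nontrivial M ∧ ∀ N : Submodule ℂ M,
          N.map σM ≤ N → (∀ b, N.map (ρM b) ≤ N) → N = ⊥ ∨ N = ⊤) ∧
      -- `V ≅ M ⊗ M'` as `R`-modules (intertwining the graded actions)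
      ∃ φ : TensorProduct ℂ M M' ≃ₗ[ℂ] V,
        (∀ b, φ.toLinearMap ∘ₗ
            TensorProduct.map (ρM b : M →ₗ[ℂ] M) (LinearMap.id : M' →ₗ[ℂ] M') =
            (ρ b : V →ₗ[ℂ] V) ∘ₗ φ.toLinearMap) ∧
        (∀ b', σB' b' = b' → φ.toLinearMap ∘ₗ
            TensorProduct.map (LinearMap.id : M →ₗ[ℂ] M) (ρM' b' : M' →ₗ[ℂ] M') =
            (ρ' b' : V →ₗ[ℂ] V) ∘ₗ φ.toLinearMap) ∧
        (∀ b', σB' b' = -b' → φ.toLinearMap ∘ₗ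
            TensorProduct.map σM (ρM' b' : M' →ₗ[ℂ] M') =
            (ρ' b' : V →ₗ[ℂ] V) ∘ₗ φ.toLinearMap) ∧
        φ.toLinearMap ∘ₗ TensorProduct.map σM σM' = σV ∘ₗ φ.toLinearMap := by
  classical
  obtain ⟨hVnt, hVs⟩ := hVsimple
  obtain ⟨hM'nt, hM's⟩ := hstrict
  obtain ⟨m₀, hm₀⟩ := exists_ne (0 : M')
  -- pointwise versions of the hypotheses
  have hσVp : ∀ v, σV (σV v) = v := fun v => by
    have := congrArg (fun f : Module.End ℂ V => f v) hσV
    simpa [Module.End.mul_apply] using this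
  have hσM'p : ∀ x, σM' (σM' x) = x := fun x => by
    have := congrArg (fun f : Module.End ℂ M' => f x) hσM'
    simpa [Module.End.mul_apply] using this
  have hcompp : ∀ b v, σV (ρ b v) = ρ (σB b) (σV v) := fun b v => by
    have := congrArg (fun f : Module.End ℂ V => f v) (hcomp b)
    simpa [Module.End.mul_apply] using this
  have hcomp'p : ∀ b' v, σV (ρ' b' v) = ρ' (σB' b') (σV v) := fun b' v => by
    have := congrArg (fun f : Module.End ℂ V => f v) (hcomp' b')
    simpa [Module.End.mul_apply] using this
  have hcompM'p : ∀ b' x, σM' (ρM' b' x) = ρM' (σB' b') (σM' x) := fun b' x => by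
    have := congrArg (fun f : Module.End ℂ M' => f x) (hcompM' b')
    simpa [Module.End.mul_apply] using this
  have hsc1p : ∀ b b', (σB b = b ∨ σB' b' = b') → ∀ v,
      ρ b (ρ' b' v) = ρ' b' (ρ b v) := fun b b' h v => by
    have := congrArg (fun f : Module.End ℂ V => f v) (hsc1 b b' h)
    simpa [Module.End.mul_apply] using this
  have hsc2p : ∀ b b', σB b = -b → σB' b' = -b' → ∀ v,
      ρ b (ρ' b' v) = -(ρ' b' (ρ b v)) := fun b b' h h' v => by
    have := congrArg (fun f : Module.End ℂ V => f v) (hsc2 b b' h h')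
    simpa [Module.End.mul_apply] using this
  have hembp : ∀ b' x, emb (ρM' b' x) = ρ' b' (emb x) := fun b' x => by
    have := congrArg (fun f : M' →ₗ[ℂ] V => f x) (hequiv b')
    simpa using this
  have hgrp : ∀ x, emb (σM' x) = σV (emb x) := fun x => by
    have := congrArg (fun f : M' →ₗ[ℂ] V => f x) hgr
    simpa using this
  -- decomposition into homogeneous parts
  have hdecB : ∀ b : B, ∃ p q : B, σB p = p ∧ σB q = -q ∧ p + q = b := by
    intro b
    refine ⟨(2⁻¹ : ℂ) • (b + σB b), (2⁻¹ : ℂ) • (b - σB b), ?_, ?_, ?_⟩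
    · rw [map_smul, map_add, hσB, add_comm]
    · rw [map_smul, map_sub, hσB, ← smul_neg, neg_sub]
    · rw [← smul_add]
      have : b + σB b + (b - σB b) = (2 : ℂ) • b := by
        rw [two_smul]; abel
      rw [this, smul_smul]
      norm_num
  have hdecB' : ∀ b' : B', ∃ p q : B', σB' p = p ∧ σB' q = -q ∧ p + q = b' := by
    intro b'
    refine ⟨(2⁻¹ : ℂ) • (b' + σB' b'), (2⁻¹ : ℂ) • (b' - σB' b'), ?_, ?_, ?_⟩
    · rw [map_smul, map_add, hσB', add_comm]
    · rw [map_smul, map_sub, hσB', ← smul_neg, neg_sub]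
    · rw [← smul_add]
      have : b' + σB' b' + (b' - σB' b') = (2 : ℂ) • b' := by
        rw [two_smul]; abel
      rw [this, smul_smul]
      norm_num
  -- mixed commutation for odd b'
  have hodd : ∀ b b', σB' b' = -b' → ∀ v,
      ρ b (ρ' b' v) = ρ' b' (ρ (σB b) v) := by
    intro b b' hb' v
    obtain ⟨p, q, hp, hq, hpq⟩ := hdecB b
    have hσb : σB b = p - q := by rw [← hpq, map_add, hp, hq]; abel
    have h1 : ρ b v = ρ p v + ρ q v := by rw [← hpq, map_add]; rfl
    have h2 : ρ b (ρ' b' v) = ρ p (ρ' b' v) + ρ q (ρ' b' v) := by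
      rw [← hpq, map_add]; rfl
    rw [h2, hsc1p p b' (Or.inl hp), hsc2p q b' hq hb', hσb, map_sub]
    rw [LinearMap.sub_apply, map_sub]
    abel
  -- the grading operator on Hom(M',V)
  let Sig : (M' →ₗ[ℂ] V) →ₗ[ℂ] (M' →ₗ[ℂ] V) :=
    { toFun := fun f => (σV ∘ₗ f) ∘ₗ (σM' : M' →ₗ[ℂ] M')
      map_add' := fun f g => by
        apply LinearMap.ext; intro x
        simp
      map_smul' := fun c f => by
        apply LinearMap.ext; intro x
        simp }
  have hSigp : ∀ (f : M' →ₗ[ℂ] V) (x : M'), Sig f x = σV (f (σM' x)) := fun f x => rfl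
  have hSigSig : ∀ f : M' →ₗ[ℂ] V, Sig (Sig f) = f := by
    intro f; apply LinearMap.ext; intro x
    rw [hSigp, hSigp, hσM'p, hσVp]
  -- the super-Hom space
  let Msub : Submodule ℂ (M' →ₗ[ℂ] V) :=
    { carrier := {f | (∀ c x, σB' c = c → f (ρM' c x) = ρ' c (f x)) ∧
        (∀ c x, σB' c = -c → f (ρM' c x) = ρ' c (σV (f (σM' x))))}
      add_mem' := by
        rintro f g ⟨hf1, hf2⟩ ⟨hg1, hg2⟩
        constructor
        · intro c x hc
          simp only [LinearMap.add_apply, hf1 c x hc, hg1 c x hc, map_add]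
        · intro c x hc
          simp only [LinearMap.add_apply, hf2 c x hc, hg2 c x hc, map_add]
      zero_mem' := by
        constructor <;> intro c x hc <;> simp
      smul_mem' := by
        rintro a f ⟨hf1, hf2⟩
        constructor
        · intro c x hc
          simp only [LinearMap.smul_apply, hf1 c x hc, map_smul]
        · intro c x hc
          simp only [LinearMap.smul_apply, hf2 c x hc, map_smul] }
  have hMsub : ∀ f : M' →ₗ[ℂ] V, f ∈ Msub ↔
      ((∀ c x, σB' c = c → f (ρM' c x) = ρ' c (f x)) ∧
        (∀ c x, σB' c = -c → f (ρM' c x) = ρ' c (σV (f (σM' x))))) := fun f => Iff.rfl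
  -- Msub is closed under Sig
  have hSigMem : ∀ f ∈ Msub, Sig f ∈ Msub := by
    intro f hf
    obtain ⟨hf1, hf2⟩ := (hMsub f).mp hf
    constructor
    · intro c x hc
      rw [hSigp, hcompM'p, hc, hf1 c _ hc, hcomp'p, hc, hSigp]
    · intro c x hc
      have e1 : Sig f (ρM' c x) = ρ' c (f x) := by
        calc Sig f (ρM' c x) = σV (f (σM' (ρM' c x))) := rfl
        _ = σV (f (ρM' (σB' c) (σM' x))) := by rw [hcompM'p]
        _ = σV (f (-(ρM' c (σM' x)))) := by
              rw [hc, map_neg, LinearMap.neg_apply]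
        _ = -σV (f (ρM' c (σM' x))) := by rw [map_neg, map_neg]
        _ = -σV (ρ' c (σV (f (σM' (σM' x))))) := by rw [hf2 c (σM' x) hc]
        _ = -σV (ρ' c (σV (f x))) := by rw [hσM'p]
        _ = -(ρ' (σB' c) (σV (σV (f x)))) := by rw [hcomp'p]
        _ = -(ρ' (-c) (f x)) := by rw [hc, hσVp]
        _ = ρ' c (f x) := by rw [map_neg, LinearMap.neg_apply, neg_neg]
      have e2 : ρ' c (σV (Sig f (σM' x))) = ρ' c (f x) := by
        rw [hSigp, hσM'p, hσVp]
      rw [e1, e2]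
  -- even elements of Msub are plain homs
  have hEvenAct : ∀ f ∈ Msub, Sig f = f → ∀ b' x, f (ρM' b' x) = ρ' b' (f x) := by
    intro f hf hSf b' x
    obtain ⟨hf1, hf2⟩ := (hMsub f).mp hf
    obtain ⟨p, q, hp, hq, hpq⟩ := hdecB' b'
    have hx : σV (f (σM' x)) = f x := by
      rw [← hSigp, hSf]
    have h1 : f (ρM' b' x) = f (ρM' p x) + f (ρM' q x) := by
      rw [← hpq, map_add]; rw [LinearMap.add_apply, map_add]
    rw [h1, hf1 p x hp, hf2 q x hq, hx, ← hpq, map_add]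
    rfl
  -- odd elements of Msub are twisted homs
  have hOddAct : ∀ f ∈ Msub, Sig f = -f → ∀ b' x,
      f (ρM' b' x) = ρ' (σB' b') (f x) := by
    intro f hf hSf b' x
    obtain ⟨hf1, hf2⟩ := (hMsub f).mp hf
    obtain ⟨p, q, hp, hq, hpq⟩ := hdecB' b'
    have hx : σV (f (σM' x)) = -(f x) := by
      rw [← hSigp, hSf]; rfl
    have h1 : f (ρM' b' x) = f (ρM' p x) + f (ρM' q x) := by
      rw [← hpq, map_add]; rw [LinearMap.add_apply, map_add]
    have hσb : σB' b' = p - q := by rw [← hpq, map_add, hp, hq]; abel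
    rw [h1, hf1 p x hp, hf2 q x hq, hx, hσb, map_sub]
    rw [map_neg, LinearMap.sub_apply]
    abel
  -- Msub is closed under postcomposition with ρ b
  have hCompMem : ∀ (b : B) (f : M' →ₗ[ℂ] V), f ∈ Msub → (ρ b ∘ₗ f) ∈ Msub := by
    intro b f hf
    obtain ⟨hf1, hf2⟩ := (hMsub f).mp hf
    constructor
    · intro c x hc
      simp only [LinearMap.comp_apply]
      rw [hf1 c x hc, hsc1p b c (Or.inr hc)]
    · intro c x hc
      simp only [LinearMap.comp_apply]
      rw [hf2 c x hc, hodd b c hc, ← hcompp]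
  have hembMem : emb ∈ Msub := by
    constructor
    · intro c x _; exact hembp c x
    · intro c x _
      rw [hembp, hgrp, hσVp]
  -- the B-action on Msub
  let ρMfun : B → Module.End ℂ ↥Msub := fun b =>
    { toFun := fun f => ⟨ρ b ∘ₗ (f : M' →ₗ[ℂ] V), hCompMem b f.1 f.2⟩
      map_add' := fun f g => by
        apply Subtype.ext; apply LinearMap.ext; intro x; simp
      map_smul' := fun c f => by
        apply Subtype.ext; apply LinearMap.ext; intro x; simp }
  have hρMfunp : ∀ (b : B) (f : ↥Msub) (x : M'),
      ((ρMfun b f : ↥Msub) : M' →ₗ[ℂ] V) x = ρ b ((f : M' →ₗ[ℂ] V) x) :=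
    fun b f x => rfl
  let ρM : B →ₐ[ℂ] Module.End ℂ ↥Msub :=
    { toFun := ρMfun
      map_one' := by
        apply LinearMap.ext; intro f; apply Subtype.ext; apply LinearMap.ext; intro x
        show ρ 1 ((f : M' →ₗ[ℂ] V) x) = _
        rw [map_one]; rfl
      map_mul' := fun a b => by
        apply LinearMap.ext; intro f; apply Subtype.ext; apply LinearMap.ext; intro x
        show ρ (a * b) ((f : M' →ₗ[ℂ] V) x) = _
        rw [map_mul]; rfl
      map_zero' := by
        apply LinearMap.ext; intro f; apply Subtype.ext; apply LinearMap.ext; intro x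
        show ρ 0 ((f : M' →ₗ[ℂ] V) x) = _
        rw [map_zero]; rfl
      map_add' := fun a b => by
        apply LinearMap.ext; intro f; apply Subtype.ext; apply LinearMap.ext; intro x
        show ρ (a + b) ((f : M' →ₗ[ℂ] V) x) = _
        rw [map_add]; rfl
      commutes' := fun c => by
        apply LinearMap.ext; intro f; apply Subtype.ext; apply LinearMap.ext; intro x
        show ρ (algebraMap ℂ B c) ((f : M' →ₗ[ℂ] V) x) = _
        rw [AlgHom.commutes, Module.algebraMap_end_apply]
        rfl }
  have hρMp : ∀ (b : B) (f : ↥Msub) (x : M'),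
      ((ρM b f : ↥Msub) : M' →ₗ[ℂ] V) x = ρ b ((f : M' →ₗ[ℂ] V) x) :=
    fun b f x => rfl
  -- the grading on Msub
  let σM : Module.End ℂ ↥Msub :=
    { toFun := fun f => ⟨Sig f.1, hSigMem f.1 f.2⟩
      map_add' := fun f g => by
        apply Subtype.ext
        show Sig (f.1 + g.1) = Sig f.1 + Sig g.1
        rw [map_add]
      map_smul' := fun c f => by
        apply Subtype.ext
        show Sig (c • f.1) = c • Sig f.1
        rw [map_smul] }
  have hσMp : ∀ (f : ↥Msub) (x : M'),
      ((σM f : ↥Msub) : M' →ₗ[ℂ] V) x = σV ((f : M' →ₗ[ℂ] V) (σM' x)) :=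
    fun f x => rfl
  -- the evaluation map
  let ev : (↥Msub ⊗[ℂ] M') →ₗ[ℂ] V := TensorProduct.lift (Msub.subtype)
  have hevp : ∀ (f : ↥Msub) (m : M'), ev (f ⊗ₜ[ℂ] m) = (f : M' →ₗ[ℂ] V) m :=
    fun f m => rfl
  -- intertwining on pure tensors
  have hevB : ∀ (b : B) (f : ↥Msub) (m : M'),
      ev ((ρM b f) ⊗ₜ[ℂ] m) = ρ b (ev (f ⊗ₜ[ℂ] m)) := fun b f m => rfl
  have hevE : ∀ (b' : B'), σB' b' = b' → ∀ (f : ↥Msub) (m : M'),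
      ev (f ⊗ₜ[ℂ] (ρM' b' m)) = ρ' b' (ev (f ⊗ₜ[ℂ] m)) := by
    intro b' hb' f m
    rw [hevp, hevp]
    exact f.2.1 b' m hb'
  have hevO : ∀ (b' : B'), σB' b' = -b' → ∀ (f : ↥Msub) (m : M'),
      ev ((σM f) ⊗ₜ[ℂ] (ρM' b' m)) = ρ' b' (ev (f ⊗ₜ[ℂ] m)) := by
    intro b' hb' f m
    rw [hevp, hevp]
    calc Sig f.1 (ρM' b' m) = σV (f.1 (σM' (ρM' b' m))) := rfl
    _ = σV (f.1 (ρM' (σB' b') (σM' m))) := by rw [hcompM'p]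
    _ = σV (f.1 (-(ρM' b' (σM' m)))) := by
          rw [hb', map_neg, LinearMap.neg_apply]
    _ = -σV (f.1 (ρM' b' (σM' m))) := by rw [map_neg, map_neg]
    _ = -σV (ρ' b' (σV (f.1 (σM' (σM' m))))) := by rw [f.2.2 b' (σM' m) hb']
    _ = -σV (ρ' b' (σV (f.1 m))) := by rw [hσM'p]
    _ = -(ρ' (σB' b') (σV (σV (f.1 m)))) := by rw [hcomp'p]
    _ = -(ρ' (-b') (f.1 m)) := by rw [hb', hσVp]
    _ = ρ' b' (f.1 m) := by rw [map_neg, LinearMap.neg_apply, neg_neg]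
  have hevS : ∀ (f : ↥Msub) (m : M'),
      ev ((σM f) ⊗ₜ[ℂ] (σM' m)) = σV (ev (f ⊗ₜ[ℂ] m)) := by
    intro f m
    rw [hevp, hevp, hσMp, hσM'p]
  -- LinearMap-level intertwiners
  have HB : ∀ b : B, ev ∘ₗ TensorProduct.map (ρM b : ↥Msub →ₗ[ℂ] ↥Msub)
      (LinearMap.id : M' →ₗ[ℂ] M') = (ρ b : V →ₗ[ℂ] V) ∘ₗ ev := by
    intro b
    apply TensorProduct.ext'
    intro f m
    simp only [LinearMap.comp_apply, TensorProduct.map_tmul, LinearMap.id_coe, id_eq]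
    exact hevB b f m
  have HE : ∀ b' : B', σB' b' = b' → ev ∘ₗ TensorProduct.map
      (LinearMap.id : ↥Msub →ₗ[ℂ] ↥Msub) (ρM' b' : M' →ₗ[ℂ] M')
      = (ρ' b' : V →ₗ[ℂ] V) ∘ₗ ev := by
    intro b' hb'
    apply TensorProduct.ext'
    intro f m
    simp only [LinearMap.comp_apply, TensorProduct.map_tmul, LinearMap.id_coe, id_eq]
    exact hevE b' hb' f m
  have HO : ∀ b' : B', σB' b' = -b' → ev ∘ₗ TensorProduct.map
      (σM : ↥Msub →ₗ[ℂ] ↥Msub) (ρM' b' : M' →ₗ[ℂ] M')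
      = (ρ' b' : V →ₗ[ℂ] V) ∘ₗ ev := by
    intro b' hb'
    apply TensorProduct.ext'
    intro f m
    simp only [LinearMap.comp_apply, TensorProduct.map_tmul]
    exact hevO b' hb' f m
  have HS : ev ∘ₗ TensorProduct.map (σM : ↥Msub →ₗ[ℂ] ↥Msub)
      (σM' : M' →ₗ[ℂ] M') = (σV : V →ₗ[ℂ] V) ∘ₗ ev := by
    apply TensorProduct.ext'
    intro f m
    simp only [LinearMap.comp_apply, TensorProduct.map_tmul]
    exact hevS f m
  -- the embedding as an element of Msub
  set embS : ↥Msub := ⟨emb, hembMem⟩ with hembS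
  have hembne : (embS : M' →ₗ[ℂ] V) m₀ ≠ 0 := by
    intro h
    exact hm₀ (hinj (by rw [h, map_zero]))
  -- surjectivity of ev
  have hevsurj : Function.Surjective ev := by
    have hr : LinearMap.range ev = ⊥ ∨ LinearMap.range ev = ⊤ := by
      refine hVs _ ?_ ?_ ?_
      · rintro x ⟨y, ⟨t, rfl⟩, rfl⟩
        refine ⟨TensorProduct.map (σM : ↥Msub →ₗ[ℂ] ↥Msub) (σM' : M' →ₗ[ℂ] M') t, ?_⟩
        have := congrArg (fun g => g t) HS
        simpa using this
      · intro b
        rintro x ⟨y, ⟨t, rfl⟩, rfl⟩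
        refine ⟨TensorProduct.map (ρM b : ↥Msub →ₗ[ℂ] ↥Msub) (LinearMap.id : M' →ₗ[ℂ] M') t, ?_⟩
        have := congrArg (fun g => g t) (HB b)
        simpa using this
      · intro b'
        rintro x ⟨y, ⟨t, rfl⟩, rfl⟩
        obtain ⟨p, q, hp, hq, hpq⟩ := hdecB' b'
        have h1 : ρ' b' (ev t) = ev (TensorProduct.map (LinearMap.id : ↥Msub →ₗ[ℂ] ↥Msub)
            (ρM' p : M' →ₗ[ℂ] M') t) + ev (TensorProduct.map (σM : ↥Msub →ₗ[ℂ] ↥Msub)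
            (ρM' q : M' →ₗ[ℂ] M') t) := by
          have e1 := congrArg (fun g => g t) (HE p hp)
          have e2 := congrArg (fun g => g t) (HO q hq)
          simp only [LinearMap.comp_apply] at e1 e2
          rw [e1, e2, ← hpq]
          rw [map_add ρ' p q, LinearMap.add_apply]
        refine ⟨TensorProduct.map (LinearMap.id : ↥Msub →ₗ[ℂ] ↥Msub)
            (ρM' p : M' →ₗ[ℂ] M') t + TensorProduct.map (σM : ↥Msub →ₗ[ℂ] ↥Msub)
            (ρM' q : M' →ₗ[ℂ] M') t, ?_⟩
        rw [map_add, ← h1]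
    rcases hr with hr | hr
    · exfalso
      have : ev (embS ⊗ₜ[ℂ] m₀) = 0 := by
        rw [LinearMap.range_eq_bot.mp hr]; rfl
      exact hembne (by rw [← hevp embS m₀, this])
    · exact LinearMap.range_eq_top.mp hr
  -- the space of plain B'-homs
  let Hplus : Submodule ℂ (M' →ₗ[ℂ] V) :=
    { carrier := {f | ∀ b' x, f (ρM' b' x) = ρ' b' (f x)}
      add_mem' := by
        intro f g hf hg b' x
        simp only [LinearMap.add_apply, hf b' x, hg b' x, map_add]
      zero_mem' := by intro b' x; simp
      smul_mem' := by
        intro c f hf b' x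
        simp only [LinearMap.smul_apply, hf b' x, map_smul] }
  have hHplus : ∀ f : M' →ₗ[ℂ] V, f ∈ Hplus ↔ ∀ b' x, f (ρM' b' x) = ρ' b' (f x) :=
    fun f => Iff.rfl
  have hSigHplus : ∀ f ∈ Hplus, Sig f ∈ Hplus := by
    intro f hf b' x
    rw [hSigp, hcompM'p, hf (σB' b') (σM' x), hcomp'p, hσB', hSigp]
  -- even / odd projections
  let P0 : Module.End ℂ (M' →ₗ[ℂ] V) := (2⁻¹ : ℂ) • (LinearMap.id + Sig)
  let P1 : Module.End ℂ (M' →ₗ[ℂ] V) := (2⁻¹ : ℂ) • (LinearMap.id - Sig)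
  have hP0p : ∀ f, P0 f = (2⁻¹ : ℂ) • (f + Sig f) := fun f => rfl
  have hP1p : ∀ f, P1 f = (2⁻¹ : ℂ) • (f - Sig f) := fun f => rfl
  have hP0P1 : ∀ f, P0 f + P1 f = f := by
    intro f
    rw [hP0p, hP1p, ← smul_add]
    have : (f + Sig f) + (f - Sig f) = (2 : ℂ) • f := by rw [two_smul]; abel
    rw [this, smul_smul]
    norm_num
  have hSigP0 : ∀ f, Sig (P0 f) = P0 f := by
    intro f
    rw [hP0p, map_smul, map_add, hSigSig, add_comm (Sig f) f]
  have hSigP1 : ∀ f, Sig (P1 f) = -(P1 f) := by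
    intro f
    rw [hP1p, map_smul, map_sub, hSigSig, ← smul_neg, neg_sub]
  have hP0even : ∀ f, Sig f = f → P0 f = f := by
    intro f hf
    rw [hP0p, hf]
    have : f + f = (2 : ℂ) • f := by rw [two_smul]
    rw [this, smul_smul]
    norm_num
  have hP0odd : ∀ f, Sig f = -f → P0 f = 0 := by
    intro f hf
    rw [hP0p, hf, add_neg_cancel, smul_zero]
  have hP1even : ∀ f, Sig f = f → P1 f = 0 := by
    intro f hf
    rw [hP1p, hf, sub_self, smul_zero]
  have hP1odd : ∀ f, Sig f = -f → P1 f = f := by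
    intro f hf
    rw [hP1p, hf, sub_neg_eq_add]
    have : f + f = (2 : ℂ) • f := by rw [two_smul]
    rw [this, smul_smul]
    norm_num
  -- precomposition with σM'
  let cσ : (M' →ₗ[ℂ] V) →ₗ[ℂ] (M' →ₗ[ℂ] V) :=
    { toFun := fun f => f ∘ₗ (σM' : M' →ₗ[ℂ] M')
      map_add' := fun f g => by apply LinearMap.ext; intro x; simp
      map_smul' := fun c f => by apply LinearMap.ext; intro x; simp }
  have hcσp : ∀ (f : M' →ₗ[ℂ] V) (x : M'), cσ f x = f (σM' x) := fun f x => rfl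
  -- component membership facts
  have hP0Mem : ∀ f ∈ Msub, P0 f ∈ Hplus := by
    intro f hf
    have h1 : P0 f ∈ Msub := Msub.smul_mem _ (Msub.add_mem hf (hSigMem f hf))
    intro b' x
    exact hEvenAct (P0 f) h1 (hSigP0 f) b' x
  have hcσP1Mem : ∀ f ∈ Msub, cσ (P1 f) ∈ Hplus := by
    intro f hf
    have h1 : P1 f ∈ Msub := Msub.smul_mem _ (Msub.sub_mem hf (hSigMem f hf))
    have h2 : ∀ b' x, P1 f (ρM' b' x) = ρ' (σB' b') (P1 f x) :=
      hOddAct (P1 f) h1 (hSigP1 f)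
    intro b' x
    rw [hcσp, hcompM'p, h2 (σB' b') (σM' x), hσB', hcσp]
  have hSigcσ : ∀ f : M' →ₗ[ℂ] V, Sig f = -f → Sig (cσ f) = -(cσ f) := by
    intro f hf
    apply LinearMap.ext; intro x
    have := congrArg (fun g : M' →ₗ[ℂ] V => g (σM' x)) hf
    simp only [LinearMap.neg_apply] at this
    rw [hSigp] at this
    show Sig (cσ f) x = -(cσ f x)
    rw [hSigp, hcσp, hcσp]
    exact this
  -- graded pieces
  let Hp : Submodule ℂ (M' →ₗ[ℂ] V) :=
    { carrier := {f | f ∈ Hplus ∧ Sig f = f}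
      add_mem' := by
        rintro f g ⟨hf1, hf2⟩ ⟨hg1, hg2⟩
        exact ⟨Hplus.add_mem hf1 hg1, by rw [map_add, hf2, hg2]⟩
      zero_mem' := ⟨Hplus.zero_mem, by rw [map_zero]⟩
      smul_mem' := by
        rintro c f ⟨hf1, hf2⟩
        exact ⟨Hplus.smul_mem c hf1, by rw [map_smul, hf2]⟩ }
  let Hm : Submodule ℂ (M' →ₗ[ℂ] V) :=
    { carrier := {f | f ∈ Hplus ∧ Sig f = -f}
      add_mem' := by
        rintro f g ⟨hf1, hf2⟩ ⟨hg1, hg2⟩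
        exact ⟨Hplus.add_mem hf1 hg1, by rw [map_add, hf2, hg2]; abel⟩
      zero_mem' := ⟨Hplus.zero_mem, by rw [map_zero]; rw [neg_zero]⟩
      smul_mem' := by
        rintro c f ⟨hf1, hf2⟩
        exact ⟨Hplus.smul_mem c hf1, by rw [map_smul, hf2, smul_neg]⟩ }
  -- the pair embedding
  let Θ : ↥Msub →ₗ[ℂ] (↥Hp × ↥Hm) :=
    { toFun := fun f =>
        (⟨P0 f.1, ⟨hP0Mem f.1 f.2, hSigP0 f.1⟩⟩,
         ⟨cσ (P1 f.1), ⟨hcσP1Mem f.1 f.2, hSigcσ (P1 f.1) (hSigP1 f.1)⟩⟩)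
      map_add' := fun f g => by
        refine Prod.ext (Subtype.ext ?_) (Subtype.ext ?_)
        · show P0 (f.1 + g.1) = P0 f.1 + P0 g.1
          rw [map_add]
        · show cσ (P1 (f.1 + g.1)) = cσ (P1 f.1) + cσ (P1 g.1)
          rw [map_add, map_add]
      map_smul' := fun c f => by
        refine Prod.ext (Subtype.ext ?_) (Subtype.ext ?_)
        · show P0 (c • f.1) = c • P0 f.1
          rw [map_smul]
        · show cσ (P1 (c • f.1)) = c • cσ (P1 f.1)
          rw [map_smul, map_smul] }
  have hΘker : LinearMap.ker Θ = ⊥ := by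
    rw [LinearMap.ker_eq_bot']
    intro f hf
    have h1 : P0 f.1 = 0 := congrArg Subtype.val (congrArg Prod.fst hf)
    have h2 : cσ (P1 f.1) = 0 := congrArg Subtype.val (congrArg Prod.snd hf)
    have h3 : P1 f.1 = 0 := by
      apply LinearMap.ext; intro x
      have := congrArg (fun g : M' →ₗ[ℂ] V => g (σM' x)) h2
      simp only [LinearMap.zero_apply] at this
      rw [hcσp, hσM'p] at this
      simpa using this
    apply Subtype.ext
    rw [← hP0P1 f.1, h1, h3, add_zero]
    rfl
  -- Schur property for M'
  have hschur' : ∀ e : Module.End ℂ M', (∀ b', e * ρM' b' = ρM' b' * e) →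
      ∃ c : ℂ, e = c • (1 : Module.End ℂ M') :=
    fun e he => schur_scalar hcount ρM' hM'nt hM's e he
  -- injectivity of evaluation on plain homs
  have hEVinj : ∀ t : ↥Hplus ⊗[ℂ] M', TensorProduct.lift (Hplus.subtype) t = 0 → t = 0 := by
    apply tensor_injective _
    intro n f hli m hsum i
    refine indep_eval ρM' ρ' hM's hschur' n (fun i => (f i).1)
      (fun i b' x => (f i).2 b' x) ?_ m ?_ i
    · exact hli.map' Hplus.subtype (Submodule.ker_subtype _)
    · exact hsum
  -- the key independence property for Msub
  have hstar : ∀ (n : ℕ) (f : Fin n → ↥Msub), LinearIndependent ℂ f →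
      ∀ m : Fin n → M', (∑ i, (Msub.subtype (f i)) (m i)) = 0 → ∀ i, m i = 0 := by
    intro n f hli m hsum j
    let g : Fin n → ↥Hplus := fun i => ⟨P0 (f i).1, hP0Mem _ (f i).2⟩
    let h : Fin n → ↥Hplus := fun i => ⟨cσ (P1 (f i).1), hcσP1Mem _ (f i).2⟩
    set T : ↥Hplus ⊗[ℂ] M' :=
      ∑ i, (g i ⊗ₜ[ℂ] m i + h i ⊗ₜ[ℂ] σM' (m i)) with hT
    have hT0 : T = 0 := by
      apply hEVinj
      rw [hT, map_sum]
      have hterm : ∀ i, TensorProduct.lift Hplus.subtype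
          (g i ⊗ₜ[ℂ] m i + h i ⊗ₜ[ℂ] σM' (m i)) = (f i).1 (m i) := by
        intro i
        rw [map_add]
        have e1 : TensorProduct.lift Hplus.subtype (g i ⊗ₜ[ℂ] m i)
            = P0 (f i).1 (m i) := rfl
        have e2 : TensorProduct.lift Hplus.subtype (h i ⊗ₜ[ℂ] σM' (m i))
            = P1 (f i).1 (m i) := by
          show cσ (P1 (f i).1) (σM' (m i)) = P1 (f i).1 (m i)
          rw [hcσp, hσM'p]
        rw [e1, e2, ← LinearMap.add_apply, hP0P1]
      rw [Finset.sum_congr rfl (fun i _ => hterm i)]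
      exact hsum
    have hcontr : ∀ ζ : ↥Hplus →ₗ[ℂ] ℂ,
        (∑ i, (ζ (g i) • m i + ζ (h i) • σM' (m i))) = 0 := by
      intro ζ
      let κ : (↥Hplus ⊗[ℂ] M') →ₗ[ℂ] M' :=
        TensorProduct.lift ((LinearMap.lsmul ℂ M') ∘ₗ ζ)
      have hκ := congrArg κ hT0
      rw [map_zero, hT, map_sum] at hκ
      have : ∀ i, κ (g i ⊗ₜ[ℂ] m i + h i ⊗ₜ[ℂ] σM' (m i))
          = ζ (g i) • m i + ζ (h i) • σM' (m i) := fun i => by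
        rw [map_add]
        simp only [κ, TensorProduct.lift.tmul, LinearMap.comp_apply,
          LinearMap.lsmul_apply]
      rw [Finset.sum_congr rfl (fun i _ => this i)] at hκ
      exact hκ
    -- the graded projections on Hplus
    let π0 : ↥Hplus →ₗ[ℂ] ↥Hp :=
      { toFun := fun f => ⟨P0 f.1,
          ⟨Hplus.smul_mem _ (Hplus.add_mem f.2 (hSigHplus f.1 f.2)), hSigP0 f.1⟩⟩
        map_add' := fun f g => Subtype.ext (by
          show P0 (f.1 + g.1) = P0 f.1 + P0 g.1; rw [map_add])
        map_smul' := fun c f => Subtype.ext (by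
          show P0 (c • f.1) = c • P0 f.1; rw [map_smul]) }
    let π1 : ↥Hplus →ₗ[ℂ] ↥Hm :=
      { toFun := fun f => ⟨P1 f.1,
          ⟨Hplus.smul_mem _ (Hplus.sub_mem f.2 (hSigHplus f.1 f.2)), hSigP1 f.1⟩⟩
        map_add' := fun f g => Subtype.ext (by
          show P1 (f.1 + g.1) = P1 f.1 + P1 g.1; rw [map_add])
        map_smul' := fun c f => Subtype.ext (by
          show P1 (c • f.1) = c • P1 f.1; rw [map_smul]) }
    obtain ⟨Φ, hΦ⟩ := exists_dual_family (hli.map' Θ hΘker) j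
    set ξ : ↥Hp →ₗ[ℂ] ℂ := Φ ∘ₗ LinearMap.inl ℂ ↥Hp ↥Hm with hξ
    set η : ↥Hm →ₗ[ℂ] ℂ := Φ ∘ₗ LinearMap.inr ℂ ↥Hp ↥Hm with hη
    have hπ0g : ∀ i, π0 (g i) = (Θ (f i)).1 := by
      intro i
      apply Subtype.ext
      show P0 (P0 (f i).1) = P0 (f i).1
      exact hP0even _ (hSigP0 _)
    have hπ0h : ∀ i, π0 (h i) = 0 := by
      intro i
      apply Subtype.ext
      show P0 (cσ (P1 (f i).1)) = (0 : M' →ₗ[ℂ] V)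
      exact hP0odd _ (hSigcσ _ (hSigP1 _))
    have hπ1g : ∀ i, π1 (g i) = 0 := by
      intro i
      apply Subtype.ext
      show P1 (P0 (f i).1) = (0 : M' →ₗ[ℂ] V)
      exact hP1even _ (hSigP0 _)
    have hπ1h : ∀ i, π1 (h i) = (Θ (f i)).2 := by
      intro i
      apply Subtype.ext
      show P1 (cσ (P1 (f i).1)) = cσ (P1 (f i).1)
      exact hP1odd _ (hSigcσ _ (hSigP1 _))
    have hrel1 : ∑ i, ξ ((Θ (f i)).1) • m i = 0 := by
      have := hcontr (ξ ∘ₗ π0)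
      have e : ∀ i, (ξ ∘ₗ π0) (g i) • m i + (ξ ∘ₗ π0) (h i) • σM' (m i)
          = ξ ((Θ (f i)).1) • m i := by
        intro i
        simp only [LinearMap.comp_apply, hπ0g, hπ0h, map_zero, zero_smul, add_zero]
      rwa [Finset.sum_congr rfl (fun i _ => e i)] at this
    have hrel2 : ∑ i, η ((Θ (f i)).2) • m i = 0 := by
      have h2 := hcontr (η ∘ₗ π1)
      have e : ∀ i, (η ∘ₗ π1) (g i) • m i + (η ∘ₗ π1) (h i) • σM' (m i)
          = η ((Θ (f i)).2) • σM' (m i) := by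
        intro i
        simp only [LinearMap.comp_apply, hπ1g, hπ1h, map_zero, zero_smul, zero_add]
      rw [Finset.sum_congr rfl (fun i _ => e i)] at h2
      have := congrArg σM' h2
      rw [map_zero, map_sum] at this
      have e2 : ∀ i, σM' (η ((Θ (f i)).2) • σM' (m i)) = η ((Θ (f i)).2) • m i := by
        intro i
        rw [map_smul, hσM'p]
      rwa [Finset.sum_congr rfl (fun i _ => e2 i)] at this
    have hsplit : ∀ i, Φ (Θ (f i)) = ξ ((Θ (f i)).1) + η ((Θ (f i)).2) := by
      intro i
      have : Θ (f i) = (LinearMap.inl ℂ ↥Hp ↥Hm) ((Θ (f i)).1)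
          + (LinearMap.inr ℂ ↥Hp ↥Hm) ((Θ (f i)).2) := by
        simp
      rw [hξ, hη, LinearMap.comp_apply, LinearMap.comp_apply, ← map_add, ← this]
    have hfinal : m j = ∑ i, Φ (Θ (f i)) • m i := by
      have : ∀ i, Φ (Θ (f i)) = if i = j then (1 : ℂ) else 0 := fun i => hΦ i
      rw [Finset.sum_congr rfl (fun i _ => by rw [this i])]
      simp
    rw [hfinal, Finset.sum_congr rfl (fun i _ => by rw [hsplit i, add_smul]),
      Finset.sum_add_distrib, hrel1, hrel2, add_zero]
  -- injectivity of ev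
  have hevinj : Function.Injective ev := by
    intro t1 t2 h12
    have h0 : ev (t1 - t2) = 0 := by rw [map_sub, h12, sub_self]
    have := tensor_injective Msub.subtype hstar (t1 - t2) h0
    exact sub_eq_zero.mp this
  -- nontriviality of Msub
  have hMnt : Nontrivial ↥Msub := by
    refine ⟨embS, 0, fun h => hembne ?_⟩
    rw [h]
    rfl
  -- simplicity of Msub
  have hMsimple : ∀ N : Submodule ℂ ↥Msub, N.map σM ≤ N →
      (∀ b, N.map (ρM b) ≤ N) → N = ⊥ ∨ N = ⊤ := by
    intro N hNσ hNb
    by_cases hNbot : N = ⊥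
    · exact Or.inl hNbot
    right
    obtain ⟨f₀, hf₀N, hf₀ne⟩ := Submodule.exists_mem_ne_zero_of_ne_bot hNbot
    set gen : Set V := {v : V | ∃ f : ↥Msub, f ∈ N ∧ ∃ m : M',
      (f : M' →ₗ[ℂ] V) m = v} with hgen
    have hW : Submodule.span ℂ gen = ⊤ := by
      refine (hVs (Submodule.span ℂ gen) ?_ ?_ ?_).resolve_left ?_
      · rw [Submodule.map_span]
        apply Submodule.span_le.mpr
        rintro x ⟨v, ⟨f, hfN, m, rfl⟩, rfl⟩
        apply Submodule.subset_span
        refine ⟨σM f, hNσ ⟨f, hfN, rfl⟩, σM' m, ?_⟩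
        rw [hσMp, hσM'p]
      · intro b
        rw [Submodule.map_span]
        apply Submodule.span_le.mpr
        rintro x ⟨v, ⟨f, hfN, m, rfl⟩, rfl⟩
        exact Submodule.subset_span ⟨ρM b f, hNb b ⟨f, hfN, rfl⟩, m, rfl⟩
      · intro b'
        rw [Submodule.map_span]
        apply Submodule.span_le.mpr
        rintro x ⟨v, ⟨f, hfN, m, rfl⟩, rfl⟩
        obtain ⟨p, q, hp, hq, hpq⟩ := hdecB' b'
        have e1 := f.2.1 p m hp
        have e2 := hevO q hq f m
        rw [hevp, hevp] at e2
        have hb'' : ρ' b' ((f : M' →ₗ[ℂ] V) m) = (f : M' →ₗ[ℂ] V) (ρM' p m)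
            + ((σM f : ↥Msub) : M' →ₗ[ℂ] V) (ρM' q m) := by
          rw [← hpq, map_add ρ' p q, LinearMap.add_apply, ← e1, ← e2]
        rw [hb'']
        exact Submodule.add_mem _
          (Submodule.subset_span ⟨f, hfN, ρM' p m, rfl⟩)
          (Submodule.subset_span ⟨σM f, hNσ ⟨f, hfN, rfl⟩, ρM' q m, rfl⟩)
      · intro hbot
        have hfx : ∃ x, (f₀ : M' →ₗ[ℂ] V) x ≠ 0 := by
          by_contra hall
          push_neg at hall
          exact hf₀ne (Subtype.ext (LinearMap.ext fun x => by rw [hall x]; rfl))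
        obtain ⟨x, hx⟩ := hfx
        have hmem : (f₀ : M' →ₗ[ℂ] V) x ∈ Submodule.span ℂ gen :=
          Submodule.subset_span ⟨f₀, hf₀N, x, rfl⟩
        rw [hbot] at hmem
        exact hx (by simpa using hmem)
    set genT : Set (↥Msub ⊗[ℂ] M') :=
      {t : ↥Msub ⊗[ℂ] M' | ∃ f : ↥Msub, f ∈ N ∧ ∃ m : M', t = f ⊗ₜ[ℂ] m} with hgenT
    have hNT : Submodule.span ℂ genT = ⊤ := by
      apply Submodule.map_injective_of_injective hevinj
      rw [Submodule.map_span, Submodule.map_top, LinearMap.range_eq_top.mpr hevsurj]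
      have himg : ev '' genT = gen := by
        ext v
        constructor
        · rintro ⟨t, ⟨f, hfN, m, rfl⟩, rfl⟩
          exact ⟨f, hfN, m, rfl⟩
        · rintro ⟨f, hfN, m, rfl⟩
          exact ⟨f ⊗ₜ[ℂ] m, ⟨f, hfN, m, rfl⟩, rfl⟩
      rw [himg, hW]
    rw [Submodule.eq_top_iff']
    intro x₀
    by_contra hx₀
    have hq0 : N.mkQ x₀ ≠ 0 := by
      intro h
      exact hx₀ ((Submodule.Quotient.mk_eq_zero N).mp h)
    obtain ⟨Φq, hΦq⟩ := exists_dual_one (K := ℂ) hq0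
    set Φ : ↥Msub →ₗ[ℂ] ℂ := Φq ∘ₗ N.mkQ with hΦdef
    obtain ⟨ψ, hψ⟩ := exists_dual_one (K := ℂ) hm₀
    set Ω : (↥Msub ⊗[ℂ] M') →ₗ[ℂ] ℂ :=
      TensorProduct.lift (LinearMap.smulRight Φ ψ) with hΩdef
    have hΩtm : ∀ (f : ↥Msub) (m : M'), Ω (f ⊗ₜ[ℂ] m) = Φ f • ψ m := by
      intro f m
      simp only [hΩdef, TensorProduct.lift.tmul, LinearMap.smulRight_apply,
        LinearMap.smul_apply]
    have hΩ0 : Ω = 0 := by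
      have hle : Submodule.span ℂ genT ≤ LinearMap.ker Ω := by
        apply Submodule.span_le.mpr
        rintro t ⟨f, hfN, m, rfl⟩
        refine LinearMap.mem_ker.mpr ?_
        rw [hΩtm]
        have hz : Φ f = 0 := by
          show Φq (N.mkQ f) = 0
          have : N.mkQ f = 0 := (Submodule.Quotient.mk_eq_zero N).mpr hfN
          rw [this, map_zero]
        rw [hz, zero_smul]
      rw [hNT] at hle
      apply LinearMap.ext
      intro t
      exact LinearMap.mem_ker.mp (hle trivial)
    have hone : Ω (x₀ ⊗ₜ[ℂ] m₀) = 1 := by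
      rw [hΩtm]
      have h1 : Φ x₀ = 1 := hΦq
      rw [h1, hψ, one_smul]
    rw [hΩ0] at hone
    simpa using hone
  -- assemble everything
  let φ : (↥Msub ⊗[ℂ] M') ≃ₗ[ℂ] V := LinearEquiv.ofBijective ev ⟨hevinj, hevsurj⟩
  have hφ : φ.toLinearMap = ev := rfl
  refine ⟨↥Msub, inferInstance, inferInstance, ρM, σM, ?_, ?_, ⟨hMnt, hMsimple⟩,
    φ, ?_, ?_, ?_, ?_⟩
  · apply LinearMap.ext; intro f; apply Subtype.ext; apply LinearMap.ext; intro x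
    show Sig (Sig f.1) x = f.1 x
    rw [hSigSig]
  · intro b
    apply LinearMap.ext; intro f; apply Subtype.ext; apply LinearMap.ext; intro x
    show Sig (ρ b ∘ₗ f.1) x = (ρ (σB b) ∘ₗ Sig f.1) x
    rw [hSigp]
    simp only [LinearMap.comp_apply]
    rw [hcompp, hSigp]
  · intro b
    rw [hφ]
    exact HB b
  · intro b' hb'
    rw [hφ]
    exact HE b' hb'
  · intro b' hb'
    rw [hφ]
    exact HO b' hb'
  · rw [hφ]
    exact HS
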